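/- For all integers n ≥ 1 and k ≥ 1, if (Q,Σ,δ,q_0) is an initially-connected complete deterministic finite automaton structure with n states over a k-letter alphabet, and its states are relabelled 0,…,n−1 by the canonical breadth-first order (exploring from q_0 and taking outgoing edges in the fixed alphabet order σ_0 < ⋯ < σ_{k−1}), then the string (s_i)_{i∈[0,kn−1]} defined by s_i = δ(⌊i/k⌋, σ_{i mod k}) satisfies rules (R1) and (R2). -/

import Mathlib

/-- Rule (R1) for a natural-valued string of length `k*n`. -/
def RuleR1 (n k : ℕ) (s : ℕ → ℕ) : Prop :=
  ∀ m : ℕ, 2 ≤ m → m ≤ n - 1 → ∀ i < k * n, s i = m → ∃ j < i, s j = m - 1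

/-- Rule (R2) for a natural-valued string of length `k*n`. -/
def RuleR2 (n k : ℕ) (s : ℕ → ℕ) : Prop :=
  ∀ m : ℕ, 1 ≤ m → m ≤ n - 1 → ∃ j < k * m, s j = m

/-- A complete DFA structure with `n` states over a `k`-letter alphabet. -/
structure DFAStruct (n k : ℕ) where
  delta : Fin n → Fin k → Fin n
  q0 : Fin n

/-- Extension of the transition function to words. -/
def deltaStar {n k : ℕ} (d : Fin n → Fin k → Fin n) : Fin n → List (Fin k) → Fin n
  | q, [] => q
  | q, a :: w => deltaStar d (d q a) w

/-- Initially connected: every state is reachable from the initial state. -/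
def InitiallyConn {n k : ℕ} (A : DFAStruct n k) : Prop :=
  ∀ q : Fin n, ∃ w : List (Fin k), deltaStar A.delta A.q0 w = q

/-- The list of states in canonical breadth-first discovery order: starting
from the initial state, repeatedly process the `i`-th discovered state
(`i = 0, 1, …`), appending each not-yet-discovered target of its outgoing
transitions, taken in the alphabet order `σ₀ < σ₁ < ⋯ < σ_{k-1}`. -/
def bfsOrderList {n k : ℕ} (A : DFAStruct n k) : List (Fin n) :=
  (List.range n).foldl
    (fun visited i =>
      match visited[i]? with
      | none => visited
      | some q =>
          (List.finRange k).foldl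
            (fun v σ => if A.delta q σ ∈ v then v else v ++ [A.delta q σ]) visited)
    [A.q0]

namespace BFSAux
variable {n k : ℕ}

/-- One micro-step of the flattened BFS: process transition `i`,
i.e. letter `i % k` out of the `i / k`-th discovered state. -/
def g (A : DFAStruct n k) (hk : 1 ≤ k) (v : List (Fin n)) (i : ℕ) : List (Fin n) :=
  match v[i / k]? with
  | none => v
  | some q =>
      let x := A.delta q ⟨i % k, Nat.mod_lt i hk⟩
      if x ∈ v then v else v ++ [x]

/-- Flattened BFS after `t` micro-steps. -/
def W (A : DFAStruct n k) (hk : 1 ≤ k) (t : ℕ) : List (Fin n) :=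
  (List.range t).foldl (g A hk) [A.q0]

variable {A : DFAStruct n k} {hk : 1 ≤ k}

theorem W_succ (t : ℕ) : W A hk (t + 1) = g A hk (W A hk t) t := by
  unfold W; rw [List.range_succ, List.foldl_append]; rfl

theorem prefix_g (v : List (Fin n)) (i : ℕ) : v <+: g A hk v i := by
  unfold g
  cases v[i / k]? with
  | none => simp
  | some q => simp only; split <;> simp

theorem W_mono {t t' : ℕ} (h : t ≤ t') : W A hk t <+: W A hk t' := by
  induction t' with
  | zero => simp_all
  | succ t' ih =>
    rcases Nat.lt_or_ge t (t' + 1) with h' | h'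
    · exact (ih (by omega)).trans (by rw [W_succ]; exact prefix_g _ _)
    · have : t = t' + 1 := by omega
      subst this; exact List.prefix_rfl

theorem nodup_W (t : ℕ) : (W A hk t).Nodup := by
  induction t with
  | zero => simp [W]
  | succ t ih =>
    rw [W_succ]; unfold g
    cases (W A hk t)[t / k]? with
    | none => exact ih
    | some q =>
      simp only; split
      · exact ih
      · next h => rw [List.nodup_append]; refine ⟨ih, by simp, ?_⟩; intro x hx y hy; simp at hy; subst hy; rintro rfl; exact h hx

theorem length_W_le (t : ℕ) : (W A hk t).length ≤ n := by
  simpa using (nodup_W (A := A) (hk := hk) t).length_le_card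

theorem prefix_getElem? {l l' : List (Fin n)} (h : l <+: l') {p : ℕ} (hp : p < l.length) :
    l'[p]? = l[p]? := by
  obtain ⟨e, rfl⟩ := h
  rw [List.getElem?_append, if_pos hp]

theorem stall {i : ℕ} (h : (W A hk i).length ≤ i / k) :
    ∀ j, i ≤ j → W A hk j = W A hk i := by
  intro j hj
  induction j with
  | zero =>
    have : i = 0 := by omega
    rw [this]
  | succ j ih =>
    rcases Nat.lt_or_ge i (j + 1) with h' | h'
    · have hij : i ≤ j := by omega
      have e := ih hij
      rw [W_succ, e]
      unfold g
      have : (W A hk i)[j / k]? = none := by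
        apply List.getElem?_eq_none
        exact le_trans h (Nat.div_le_div_right hij)
      rw [this]
    · have : i = j + 1 := by omega
      subst this; rfl

/-- If position `p` exists in `W T` and `k*p ≤ T`, then it already exists in `W (k*p)`,
i.e. state `p` gets processed. -/
theorem pos_early {T p : ℕ} (hT : p < (W A hk T).length) (hkp : k * p ≤ T) :
    p < (W A hk (k * p)).length := by
  by_contra hc
  push_neg at hc
  have hdiv : k * p / k = p := Nat.mul_div_cancel_left p hk
  have := stall (A := A) (hk := hk) (i := k * p) (by rw [hdiv]; exact hc) T hkp
  rw [this] at hT; omega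

/-- Positions are stable: the `p`-th element of `W t'` equals that of `W t`. -/
theorem getD_stable {t t' p : ℕ} (h : t ≤ t') (hp : p < (W A hk t).length) :
    (W A hk t').getD p A.q0 = (W A hk t).getD p A.q0 := by
  have hpre := W_mono (A := A) (hk := hk) h
  have hp' : p < (W A hk t').length := lt_of_lt_of_le hp hpre.length_le
  rw [List.getD_eq_getElem _ _ hp, List.getD_eq_getElem _ _ hp']
  have := prefix_getElem? hpre hp
  rw [List.getElem?_eq_getElem hp, List.getElem?_eq_getElem hp'] at this
  exact Option.some_injective _ this

/-- The target of transition `i`, read off the final list `W (k*n)`. -/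
def target (A : DFAStruct n k) (hk : 1 ≤ k) (i : ℕ) : Fin n :=
  A.delta ((W A hk (k * n)).getD (i / k) A.q0) ⟨i % k, Nat.mod_lt i hk⟩

/-- If the source of transition `i` has been discovered by the end, then its target
is present right after micro-step `i`. -/
theorem target_mem {i : ℕ} (hsrc : i / k < (W A hk (k * n)).length) (hin : i < k * n) :
    target A hk i ∈ W A hk (i + 1) := by
  have hp : i / k < (W A hk i).length := by
    have h1 : i / k < (W A hk (k * (i / k))).length :=
      pos_early hsrc (le_of_lt (lt_of_le_of_lt (Nat.mul_div_le i k) hin))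
    exact lt_of_lt_of_le h1 (W_mono (A := A) (hk := hk) (Nat.mul_div_le i k)).length_le
  rw [W_succ]
  unfold g
  have hsome : (W A hk i)[i / k]? = some ((W A hk i).getD (i / k) A.q0) := by
    rw [List.getElem?_eq_getElem hp, List.getD_eq_getElem _ _ hp]
  rw [hsome]
  have hgetD : (W A hk (k * n)).getD (i / k) A.q0 = (W A hk i).getD (i / k) A.q0 :=
    getD_stable (le_of_lt hin) hp
  unfold target
  rw [hgetD]
  simp only
  split
  · assumption
  · simp

/-- Every element of `W t` is the initial state or a transition target. -/
theorem mem_W_cases {t : ℕ} (ht : t ≤ k * n) {x : Fin n} (hx : x ∈ W A hk t) :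
    x = A.q0 ∨ ∃ i < t, i / k < (W A hk i).length ∧ target A hk i = x := by
  induction t with
  | zero => simp [W] at hx; exact Or.inl hx
  | succ t ih =>
    rw [W_succ] at hx
    unfold g at hx
    cases hW : (W A hk t)[t / k]? with
    | none =>
      rw [hW] at hx
      rcases ih (by omega) hx with h | ⟨i, hi, h⟩
      · exact Or.inl h
      · exact Or.inr ⟨i, by omega, h⟩
    | some q =>
      rw [hW] at hx
      simp only at hx
      have hp : t / k < (W A hk t).length := by
        by_contra hc
        rw [List.getElem?_eq_none (by omega)] at hW
        simp at hW
      split at hx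
      · rcases ih (by omega) hx with h | ⟨i, hi, h⟩
        · exact Or.inl h
        · exact Or.inr ⟨i, by omega, h⟩
      · rw [List.mem_append] at hx
        rcases hx with hx | hx
        · rcases ih (by omega) hx with h | ⟨i, hi, h⟩
          · exact Or.inl h
          · exact Or.inr ⟨i, by omega, h⟩
        · simp only [List.mem_singleton] at hx
          refine Or.inr ⟨t, by omega, hp, ?_⟩
          unfold target
          rw [getD_stable (by omega) hp, List.getD_eq_getElem _ _ hp]
          rw [List.getElem?_eq_getElem hp] at hW
          rw [Option.some_injective _ hW, hx]

/-- Membership of the `m`-th discovered state in `W t` is equivalent to `m < (W t).length`. -/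
theorem mem_W_iff {t m : ℕ} (ht : t ≤ k * n) (hm : m < (W A hk (k * n)).length) :
    (W A hk (k * n)).getD m A.q0 ∈ W A hk t ↔ m < (W A hk t).length := by
  constructor
  · intro hx
    rw [List.mem_iff_getElem] at hx
    obtain ⟨j, hj, hjx⟩ := hx
    have : (W A hk (k * n)).getD j A.q0 = (W A hk (k * n)).getD m A.q0 := by
      rw [getD_stable ht hj, List.getD_eq_getElem _ _ hj, hjx]
    rw [List.getD_eq_getElem _ _ hm,
        List.getD_eq_getElem _ _ (lt_of_lt_of_le hj (W_mono ht).length_le)] at this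
    have := (nodup_W (A := A) (hk := hk) (k * n)).getElem_inj_iff.mp this
    omega
  · intro hlt
    have := getD_stable (A := A) (hk := hk) ht hlt
    rw [this, List.getD_eq_getElem _ _ hlt]
    exact List.getElem_mem _

theorem foldl_fix {α β : Type*} :
    ∀ (l : List α) (F : β → α → β) (v : β), (∀ x ∈ l, F v x = v) → l.foldl F v = v
  | [], _, _, _ => rfl
  | a :: l, F, v, h => by
    rw [List.foldl_cons, h a (by simp),
      foldl_fix l F v (fun x hx => h x (by simp [hx]))]

theorem foldl_congr_P {α β : Type*} {P : β → Prop} {F₁ F₂ : β → α → β} :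
    ∀ (l : List α) (v : β), P v → (∀ w x, P w → x ∈ l → F₁ w x = F₂ w x ∧ P (F₁ w x)) →
      l.foldl F₁ v = l.foldl F₂ v
  | [], _, _, _ => rfl
  | a :: l, v, hv, h => by
    have h1 := h v a hv (by simp)
    rw [List.foldl_cons, List.foldl_cons, ← h1.1,
      foldl_congr_P l (F₁ v a) (h1.1 ▸ h1.2) (fun w x hw hx => h w x hw (by simp [hx])),
      h1.1]

theorem foldl_eq_range {α β : Type*} (F : β → α → β) (d : α) :
    ∀ (l : List α) (v : β),
      l.foldl F v = (List.range l.length).foldl (fun w j => F w (l.getD j d)) v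
  | [], _ => rfl
  | a :: l, v => by
    rw [List.foldl_cons, foldl_eq_range F d l (F v a), List.length_cons,
      List.range_succ_eq_map, List.foldl_cons, List.foldl_map]
    simp only [List.getD_cons_zero, List.getD_cons_succ]

/-- One outer BFS step equals `k` micro-steps. -/
theorem outer_step (v : List (Fin n)) (t : ℕ) :
    (match v[t]? with
     | none => v
     | some q =>
         (List.finRange k).foldl
           (fun v' σ => if A.delta q σ ∈ v' then v' else v' ++ [A.delta q σ]) v)
    = (List.range k).foldl (fun w j => g A hk w (k * t + j)) v := by
  cases hv : v[t]? with
  | none =>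
    simp only
    refine (foldl_fix _ _ _ ?_).symm
    intro j hj
    unfold g
    have : (k * t + j) / k = t := by
      rw [Nat.mul_add_div hk, Nat.div_eq_of_lt (List.mem_range.mp hj)]; omega
    rw [this, hv]
  | some q =>
    simp only
    have ht : t < v.length := by
      by_contra hc
      rw [List.getElem?_eq_none (by omega)] at hv
      simp at hv
    rw [foldl_eq_range _ (⟨0, hk⟩ : Fin k), List.length_finRange]
    refine (foldl_congr_P (P := fun w => v <+: w) _ _ List.prefix_rfl ?_).symm
    intro w j hw hj
    have hjk : j < k := List.mem_range.mp hj
    constructor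
    · unfold g
      have hd : (k * t + j) / k = t := by
        rw [Nat.mul_add_div hk, Nat.div_eq_of_lt hjk]; omega
      have hm : (⟨(k * t + j) % k, Nat.mod_lt _ hk⟩ : Fin k) = ⟨j, hjk⟩ := by
        simp [Fin.ext_iff, Nat.mul_add_mod, Nat.mod_eq_of_lt hjk]
      have hwv : w[t]? = some q := by rw [prefix_getElem? hw ht, hv]
      rw [hd, hwv]
      simp only [hm]
      have : (List.finRange k).getD j ⟨0, hk⟩ = ⟨j, hjk⟩ := by
        rw [List.getD_eq_getElem _ _ (by simpa using hjk)]
        simp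
      rw [this]
    · unfold g
      cases w[(k * t + j) / k]? with
      | none => exact hw
      | some q' =>
        simp only
        split
        · exact hw
        · exact hw.trans (by simp)

theorem bfs_eq : bfsOrderList A = W A hk (k * n) := by
  suffices h : ∀ T : ℕ,
      (List.range T).foldl
        (fun visited i =>
          match visited[i]? with
          | none => visited
          | some q =>
              (List.finRange k).foldl
                (fun v σ => if A.delta q σ ∈ v then v else v ++ [A.delta q σ]) visited)
        [A.q0] = W A hk (k * T) from h n
  intro T
  induction T with
  | zero => rfl
  | succ T ih =>
    rw [List.range_succ, List.foldl_append, ih]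
    simp only [List.foldl_cons, List.foldl_nil]
    rw [outer_step (hk := hk)]
    show _ = W A hk (k * T + k)
    unfold W
    rw [List.range_add, List.foldl_append, List.foldl_map]

theorem getD_zero (t : ℕ) : (W A hk t).getD 0 A.q0 = A.q0 := by
  obtain ⟨e, he⟩ := W_mono (A := A) (hk := hk) (Nat.zero_le t)
  have h0 : W A hk 0 = [A.q0] := rfl
  rw [h0] at he
  rw [← he]
  rfl

theorem getD_inj {a b : ℕ} (ha : a < (W A hk (k * n)).length)
    (hb : b < (W A hk (k * n)).length)
    (h : (W A hk (k * n)).getD a A.q0 = (W A hk (k * n)).getD b A.q0) : a = b := by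
  rw [List.getD_eq_getElem _ _ ha, List.getD_eq_getElem _ _ hb] at h
  exact (nodup_W (A := A) (hk := hk) (k * n)).getElem_inj_iff.mp h


theorem exists_Q (hlen : (W A hk (k * n)).length = n) {m : ℕ} (hm1 : 1 ≤ m) (hmn : m < n) :
    ∃ i, i / k < n ∧ target A hk i = (W A hk (k * n)).getD m A.q0 := by
  have hmL : m < (W A hk (k * n)).length := by rw [hlen]; exact hmn
  have hmem : (W A hk (k * n)).getD m A.q0 ∈ W A hk (k * n) := by
    rw [List.getD_eq_getElem _ _ hmL]; exact List.getElem_mem _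
  rcases mem_W_cases (le_refl _) hmem with h | ⟨i, hi, hsrc, htg⟩
  · exfalso
    have := getD_inj (A := A) (hk := hk) hmL (by omega) (h.trans (getD_zero (k * n)).symm)
    omega
  · refine ⟨i, ?_, htg⟩
    have := length_W_le (A := A) (hk := hk) i
    omega

open Classical in
/-- The discovery transition index of state `m` (well-defined when `1 ≤ m < n`). -/
noncomputable def ff (A : DFAStruct n k) (hk : 1 ≤ k) (m : ℕ) : ℕ :=
  if h : ∃ i, i / k < n ∧ target A hk i = (W A hk (k * n)).getD m A.q0 then
    Nat.find h else 0

theorem ff_spec (hlen : (W A hk (k * n)).length = n) {m : ℕ} (hm1 : 1 ≤ m) (hmn : m < n) :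
    (ff A hk m) / k < n ∧
      target A hk (ff A hk m) = (W A hk (k * n)).getD m A.q0 := by
  have h := exists_Q (A := A) (hk := hk) hlen hm1 hmn
  unfold ff
  rw [dif_pos h]
  exact Nat.find_spec h

theorem ff_min (hlen : (W A hk (k * n)).length = n) {m : ℕ} (hm1 : 1 ≤ m) (hmn : m < n)
    {i : ℕ} (h1 : i / k < n) (h2 : target A hk i = (W A hk (k * n)).getD m A.q0) :
    ff A hk m ≤ i := by
  have h := exists_Q (A := A) (hk := hk) hlen hm1 hmn
  unfold ff
  rw [dif_pos h]
  exact Nat.find_min' h ⟨h1, h2⟩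

theorem ff_lt_kn (hlen : (W A hk (k * n)).length = n) {m : ℕ} (hm1 : 1 ≤ m) (hmn : m < n) :
    ff A hk m < k * n := by
  have h := (ff_spec (A := A) hlen hm1 hmn).1
  rw [Nat.div_lt_iff_lt_mul hk] at h
  have : n * k = k * n := Nat.mul_comm n k
  omega

theorem ff_K1 (hlen : (W A hk (k * n)).length = n) {m : ℕ} (hm1 : 1 ≤ m) (hmn : m < n) :
    m < (W A hk (ff A hk m + 1)).length := by
  have hsp := ff_spec (A := A) hlen hm1 hmn
  have hfkn : ff A hk m < k * n := ff_lt_kn (A := A) hlen hm1 hmn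
  have hmem : target A hk (ff A hk m) ∈ W A hk (ff A hk m + 1) :=
    target_mem (by rw [hlen]; exact hsp.1) hfkn
  rw [hsp.2] at hmem
  exact (mem_W_iff (by omega) (by rw [hlen]; exact hmn)).mp hmem

theorem ff_K2 (hlen : (W A hk (k * n)).length = n) {m : ℕ} (hm1 : 1 ≤ m) (hmn : m < n) :
    (W A hk (ff A hk m)).length ≤ m := by
  have hfkn : ff A hk m < k * n := ff_lt_kn (A := A) hlen hm1 hmn
  by_contra hc
  push_neg at hc
  have hmem : (W A hk (k * n)).getD m A.q0 ∈ W A hk (ff A hk m) :=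
    (mem_W_iff (by omega) (by rw [hlen]; exact hmn)).mpr hc
  rcases mem_W_cases (by omega) hmem with h | ⟨i, hi, hsrc, htg⟩
  · have := getD_inj (A := A) (hk := hk) (by rw [hlen]; exact hmn) (by rw [hlen]; omega)
      (h.trans (getD_zero (k * n)).symm)
    omega
  · have hle : ff A hk m ≤ i := ff_min (A := A) hlen hm1 hmn
      (by have := length_W_le (A := A) (hk := hk) i; omega) htg
    omega

theorem ff_lt_km (hlen : (W A hk (k * n)).length = n) {m : ℕ} (hm1 : 1 ≤ m) (hmn : m < n) :
    ff A hk m < k * m := by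
  have hsp := ff_spec (A := A) hlen hm1 hmn
  have hfkn : ff A hk m < k * n := ff_lt_kn (A := A) hlen hm1 hmn
  have hp1 : ff A hk m / k < (W A hk (k * (ff A hk m / k))).length := by
    apply pos_early (T := k * n)
    · rw [hlen]; exact hsp.1
    · have := Nat.mul_div_le (ff A hk m) k
      omega
  have hp2 : (W A hk (k * (ff A hk m / k))).length ≤ (W A hk (ff A hk m)).length :=
    (W_mono (A := A) (hk := hk) (Nat.mul_div_le (ff A hk m) k)).length_le
  have hK2 := ff_K2 (A := A) hlen hm1 hmn
  have hfm : ff A hk m / k + 1 ≤ m := by omega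
  have h1 := Nat.div_add_mod (ff A hk m) k
  have h2 : ff A hk m % k < k := Nat.mod_lt _ hk
  have h3 : k * (ff A hk m / k + 1) ≤ k * m := Nat.mul_le_mul_left k hfm
  have h4 : k * (ff A hk m / k + 1) = k * (ff A hk m / k) + k := Nat.mul_succ k _
  omega

theorem ff_mono (hlen : (W A hk (k * n)).length = n) {m m' : ℕ} (hm1 : 1 ≤ m)
    (hmm : m < m') (hm'n : m' < n) : ff A hk m < ff A hk m' := by
  have hK1 := ff_K1 (A := A) hlen (show 1 ≤ m' by omega) hm'n
  have hf'kn : ff A hk m' < k * n := ff_lt_kn (A := A) hlen (show 1 ≤ m' by omega) hm'n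
  have hmem : (W A hk (k * n)).getD m A.q0 ∈ W A hk (ff A hk m' + 1) :=
    (mem_W_iff (by omega) (by rw [hlen]; omega)).mpr (by omega)
  rcases mem_W_cases (by omega) hmem with h | ⟨i, hi, hsrc, htg⟩
  · have := getD_inj (A := A) (hk := hk) (by rw [hlen]; omega) (by rw [hlen]; omega)
      (h.trans (getD_zero (k * n)).symm)
    omega
  · have hle : ff A hk m ≤ i := ff_min (A := A) hlen hm1 (by omega)
      (by have := length_W_le (A := A) (hk := hk) i; omega) htg
    have hne : ff A hk m ≠ ff A hk m' := by
      intro he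
      have h1 := (ff_spec (A := A) hlen hm1 (show m < n by omega)).2
      have h2 := (ff_spec (A := A) hlen (show 1 ≤ m' by omega) hm'n).2
      rw [he, h2] at h1
      have := getD_inj (A := A) (hk := hk) (by rw [hlen]; omega) (by rw [hlen]; omega) h1.symm
      omega
    omega

end BFSAux

namespace BFSAux

theorem length_eq {n k : ℕ} (hn : 1 ≤ n) (hk : 1 ≤ k) (A : DFAStruct n k)
    (hall : ∀ q : Fin n, q ∈ W A hk (k * n)) : (W A hk (k * n)).length = n := by
  have h1 := length_W_le (A := A) (hk := hk) (k * n)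
  have h2 : (Finset.univ : Finset (Fin n)).card ≤ (W A hk (k * n)).toFinset.card :=
    Finset.card_le_card (fun q _ => List.mem_toFinset.mpr (hall q))
  have h3 := (W A hk (k * n)).toFinset_card_le
  simp [Finset.card_univ] at h2
  omega

end BFSAux

/-- If the states of an initially-connected complete DFA structure are
relabelled `0, …, n-1` according to the canonical breadth-first order, then
the induced string `s i = δ(⌊i/k⌋, σ_{i mod k})` takes values in `[0, n-1]`
and satisfies rules (R1) and (R2). -/
theorem stmt1 (n k : ℕ) (hn : 1 ≤ n) (hk : 1 ≤ k)
    (A : DFAStruct n k) (hA : InitiallyConn A)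
    (s : ℕ → ℕ)
    (hs : ∀ i < k * n,
      s i = (bfsOrderList A).idxOf
        (A.delta ((bfsOrderList A).getD (i / k) A.q0) ⟨i % k, Nat.mod_lt i hk⟩)) :
    (∀ i < k * n, s i < n) ∧ RuleR1 n k s ∧ RuleR2 n k s := by
  classical
  have hbfs : bfsOrderList A = BFSAux.W A hk (k * n) := BFSAux.bfs_eq
  -- the initial state is discovered
  have hq0mem : A.q0 ∈ BFSAux.W A hk (k * n) := by
    obtain ⟨e, he⟩ := BFSAux.W_mono (A := A) (hk := hk) (Nat.zero_le (k * n))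
    have h0 : BFSAux.W A hk 0 = [A.q0] := rfl
    rw [h0] at he
    rw [← he]
    simp
  -- reachability: everything reachable from a discovered state is discovered
  have hreach : ∀ (w : List (Fin k)) (q : Fin n), q ∈ BFSAux.W A hk (k * n) →
      deltaStar A.delta q w ∈ BFSAux.W A hk (k * n) := by
    intro w
    induction w with
    | nil => intro q hq; exact hq
    | cons a w ih =>
      intro q hq
      show deltaStar A.delta (A.delta q a) w ∈ _
      apply ih
      rw [List.mem_iff_getElem] at hq
      obtain ⟨p, hp, hpq⟩ := hq
      have hpn : p < n := lt_of_lt_of_le hp (BFSAux.length_W_le _)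
      have hik : (k * p + a.val) / k = p := by
        rw [Nat.mul_add_div hk, Nat.div_eq_of_lt a.isLt]
        omega
      have hikn : k * p + a.val < k * n := by
        have h1 : k * (p + 1) ≤ k * n := Nat.mul_le_mul_left k (by omega)
        have h2 : k * (p + 1) = k * p + k := Nat.mul_succ k p
        have := a.isLt
        omega
      have htg : BFSAux.target A hk (k * p + a.val) = A.delta q a := by
        unfold BFSAux.target
        congr 1
        · rw [hik, List.getD_eq_getElem _ _ hp, hpq]
        · apply Fin.ext
          show (k * p + a.val) % k = a.val
          rw [Nat.mul_add_mod]
          exact Nat.mod_eq_of_lt a.isLt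
      have hm := BFSAux.target_mem (A := A) (hk := hk) (i := k * p + a.val)
        (by rw [hik]; exact hp) hikn
      rw [htg] at hm
      exact (BFSAux.W_mono (show k * p + a.val + 1 ≤ k * n by omega)).subset hm
  have hall : ∀ q : Fin n, q ∈ BFSAux.W A hk (k * n) := by
    intro q
    obtain ⟨w, hw⟩ := hA q
    rw [← hw]
    exact hreach w A.q0 hq0mem
  have hlen : (BFSAux.W A hk (k * n)).length = n := BFSAux.length_eq hn hk A hall
  -- restated hypothesis
  have hs' : ∀ i, i < k * n → s i = (BFSAux.W A hk (k * n)).idxOf (BFSAux.target A hk i) := by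
    intro i hi
    rw [hs i hi, hbfs]
    rfl
  have htmem : ∀ i, i < k * n → BFSAux.target A hk i ∈ BFSAux.W A hk (k * n) := by
    intro i hi
    have hik : i / k < (BFSAux.W A hk (k * n)).length := by
      rw [hlen, Nat.div_lt_iff_lt_mul hk]
      have : n * k = k * n := Nat.mul_comm n k
      omega
    exact (BFSAux.W_mono (show i + 1 ≤ k * n by omega)).subset
      (BFSAux.target_mem hik hi)
  -- value of s at the discovery index
  have hsf : ∀ m, 1 ≤ m → m < n → s (BFSAux.ff A hk m) = m := by
    intro m hm1 hmn
    have hf := BFSAux.ff_spec (A := A) hlen hm1 hmn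
    have hfkn := BFSAux.ff_lt_kn (A := A) hlen hm1 hmn
    have hmL : m < (BFSAux.W A hk (k * n)).length := by rw [hlen]; exact hmn
    rw [hs' _ hfkn, hf.2, List.getD_eq_getElem _ _ hmL]
    exact List.Nodup.idxOf_getElem (BFSAux.nodup_W _) m hmL
  refine ⟨?_, ?_, ?_⟩
  · -- bounds
    intro i hi
    rw [hs' i hi]
    have h := List.idxOf_lt_length_iff.mpr (htmem i hi)
    omega
  · -- R1
    intro m hm2 hmn' i hi hsi
    have hmn : m < n := by omega
    have hmL : m < (BFSAux.W A hk (k * n)).length := by rw [hlen]; exact hmn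
    have hidx : (BFSAux.W A hk (k * n)).idxOf (BFSAux.target A hk i) = m := by
      rw [← hs' i hi]; exact hsi
    have htL : BFSAux.target A hk i = (BFSAux.W A hk (k * n)).getD m A.q0 := by
      have h1 := List.getElem_idxOf (List.idxOf_lt_length_iff.mpr (htmem i hi))
      rw [List.getD_eq_getElem _ _ hmL, ← h1]
      simp only [hidx]
    have hfle : BFSAux.ff A hk m ≤ i := by
      apply BFSAux.ff_min (A := A) hlen (by omega) hmn _ htL
      rw [Nat.div_lt_iff_lt_mul hk]
      have : n * k = k * n := Nat.mul_comm n k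
      omega
    have hfmono : BFSAux.ff A hk (m - 1) < BFSAux.ff A hk m :=
      BFSAux.ff_mono (A := A) hlen (by omega) (by omega) hmn
    exact ⟨BFSAux.ff A hk (m - 1), by omega, hsf (m - 1) (by omega) (by omega)⟩
  · -- R2
    intro m hm1 hmn'
    have hmn : m < n := by omega
    exact ⟨BFSAux.ff A hk m, BFSAux.ff_lt_km (A := A) hlen hm1 hmn, hsf m hm1 hmn⟩
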